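/- arXiv:1805.01016 — 2 statements merged into one kernel-verified Lean document; each statement's English description precedes it below -/
import Mathlib

section
/- If K is discretely valued with uniformizer π_K, the set of lattice norms is discrete and closed in the space of ultrametric norms, and for any ultrametric norm ‖·‖ the closed unit ball B is a lattice whose lattice norm ‖·‖_B satisfies d_GI(‖·‖, ‖·‖_B) ≤ v_K(π_K). -/
def IsVNorm (K : Type*) [NormedField K] {V : Type*} [AddCommGroup V] [Module K V]
    (f : V → ℝ) : Prop :=
  (∀ v, 0 ≤ f v) ∧ (∀ (a : K) (v : V), f (a • v) = ‖a‖ * f v) ∧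
    (∀ v w, f (v + w) ≤ f v + f w) ∧ ∀ v, f v = 0 → v = 0

def IsUltra {V : Type*} [AddCommGroup V] (f : V → ℝ) : Prop :=
  ∀ v w, f (v + w) ≤ max (f v) (f w)

noncomputable def dGI {V : Type*} [AddCommGroup V] (f g : V → ℝ) : ℝ :=
  ⨆ v : {v : V // v ≠ 0}, |Real.log (f v) - Real.log (g v)|

/-- A lattice norm: a norm admitting an orthonormal basis. -/
def IsLatticeNorm (K : Type*) {V : Type*} [NormedField K] [AddCommGroup V] [Module K V]
    (N : ℕ) (g : V → ℝ) : Prop :=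
  ∃ B : Module.Basis (Fin N) K V, ∀ v : V, g v = ⨆ i : Fin N, ‖B.repr v i‖

set_option maxHeartbeats 1000000
set_option synthInstance.maxHeartbeats 1000000
set_option linter.unusedSectionVars false
set_option linter.unusedVariables false

section SN
variable {K V : Type*} [NormedField K] [AddCommGroup V] [Module K V] {N : ℕ}

lemma vnorm_zero {f : V → ℝ} (hf : IsVNorm K f) : f 0 = 0 := by
  have := hf.2.1 (0 : K) 0
  simpa using this

lemma vnorm_pos {f : V → ℝ} (hf : IsVNorm K f) {v : V} (hv : v ≠ 0) : 0 < f v := by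
  rcases (hf.1 v).lt_or_eq with h | h
  · exact h
  · exact absurd (hf.2.2.2 v h.symm) hv

noncomputable def sn (B : Module.Basis (Fin N) K V) (v : V) : ℝ := ⨆ i, ‖B.repr v i‖

lemma sn_bdd (B : Module.Basis (Fin N) K V) (v : V) :
    BddAbove (Set.range fun i => ‖B.repr v i‖) :=
  (Set.finite_range _).bddAbove

lemma sn_nonneg (B : Module.Basis (Fin N) K V) (v : V) : 0 ≤ sn B v :=
  Real.iSup_nonneg fun _ => norm_nonneg _

lemma coord_le_sn (B : Module.Basis (Fin N) K V) (v : V) (i : Fin N) :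
    ‖B.repr v i‖ ≤ sn B v :=
  le_ciSup (sn_bdd B v) i

lemma sn_le (B : Module.Basis (Fin N) K V) {v : V} {a : ℝ} (ha : 0 ≤ a)
    (h : ∀ i, ‖B.repr v i‖ ≤ a) : sn B v ≤ a :=
  Real.iSup_le h ha

lemma sn_smul (B : Module.Basis (Fin N) K V) (a : K) (v : V) :
    sn B (a • v) = ‖a‖ * sn B v := by
  rw [sn, sn, Real.mul_iSup_of_nonneg (norm_nonneg a)]
  congr 1; funext i
  rw [map_smul, Finsupp.smul_apply, smul_eq_mul, norm_mul]

lemma sn_zero (B : Module.Basis (Fin N) K V) : sn B 0 = 0 := by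
  have := sn_smul B 0 0
  simpa using this

lemma sn_ultra (B : Module.Basis (Fin N) K V) (hna : IsNonarchimedean (fun x : K => ‖x‖))
    (v w : V) : sn B (v + w) ≤ max (sn B v) (sn B w) := by
  refine sn_le B (le_max_of_le_left (sn_nonneg B v)) fun i => ?_
  rw [map_add, Finsupp.add_apply]
  exact le_trans (hna _ _) (max_le_max (coord_le_sn B v i) (coord_le_sn B w i))

lemma sn_exists_pow {π : K} (hπ0 : 0 < ‖π‖)
    (hdisc : ∀ x : K, x ≠ 0 → ∃ n : ℤ, ‖x‖ = ‖π‖ ^ n)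
    (B : Module.Basis (Fin N) K V) {v : V} (hv : v ≠ 0) :
    ∃ n : ℤ, sn B v = ‖π‖ ^ n := by
  have hrepr : B.repr v ≠ 0 := fun h => hv (by simpa using congrArg B.repr.symm h)
  obtain ⟨i₁, hi₁⟩ := Finsupp.ne_iff.mp hrepr
  haveI : Nonempty (Fin N) := ⟨i₁⟩
  obtain ⟨i₀, hi₀⟩ := Finite.exists_max fun i => ‖B.repr v i‖
  have hmax : sn B v = ‖B.repr v i₀‖ :=
    le_antisymm (sn_le B (norm_nonneg _) hi₀) (coord_le_sn B v i₀)
  have hne : B.repr v i₀ ≠ 0 := by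
    intro h
    apply hi₁
    have := hi₀ i₁
    rw [h, norm_zero] at this
    simpa using le_antisymm this (norm_nonneg _)
  obtain ⟨n, hn⟩ := hdisc _ hne
  exact ⟨n, hmax.trans hn⟩

lemma sn_pos {π : K} (hπ0 : 0 < ‖π‖)
    (hdisc : ∀ x : K, x ≠ 0 → ∃ n : ℤ, ‖x‖ = ‖π‖ ^ n)
    (B : Module.Basis (Fin N) K V) {v : V} (hv : v ≠ 0) : 0 < sn B v := by
  obtain ⟨n, hn⟩ := sn_exists_pow hπ0 hdisc B hv
  rw [hn]; exact zpow_pos hπ0 n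

end SN
section SN2
variable {K V : Type*} [NormedField K] [AddCommGroup V] [Module K V] {N : ℕ}

lemma nonarch_sum (hna : IsNonarchimedean (fun x : K => ‖x‖)) {ι : Type*}
    (s : Finset ι) (h : ι → K) {a : ℝ} (ha : 0 ≤ a) (hb : ∀ i ∈ s, ‖h i‖ ≤ a) :
    ‖∑ i ∈ s, h i‖ ≤ a := by
  classical
  induction s using Finset.cons_induction with
  | empty => simpa using ha
  | cons i s his ih =>
    rw [Finset.sum_cons]
    refine le_trans (hna _ _) (max_le (hb i (Finset.mem_cons_self i s)) ?_)
    exact ih fun j hj => hb j (Finset.mem_cons_of_mem hj)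

-- every sn C is bounded by a multiple of sn B
lemma sn_le_mul (hna : IsNonarchimedean (fun x : K => ‖x‖))
    (B C : Module.Basis (Fin N) K V) :
    ∃ M : ℝ, 0 < M ∧ ∀ v, (⨆ j, ‖C.repr v j‖) ≤ M * (⨆ i, ‖B.repr v i‖) := by
  classical
  rcases Nat.eq_zero_or_pos N with hN | hN
  · refine ⟨1, one_pos, fun v => ?_⟩
    subst hN
    simp [Real.iSup_of_isEmpty]
  · haveI : Nonempty (Fin N) := ⟨⟨0, hN⟩⟩
    set M₀ : ℝ := Finset.univ.sup' (Finset.univ_nonempty)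
      (fun p : Fin N × Fin N => ‖C.repr (B p.1) p.2‖) with hM₀
    set M : ℝ := max 1 M₀ with hM
    have hMpos : 0 < M := lt_of_lt_of_le one_pos (le_max_left _ _)
    refine ⟨M, hMpos, fun v => ?_⟩
    have hBnn : 0 ≤ ⨆ i, ‖B.repr v i‖ := Real.iSup_nonneg fun _ => norm_nonneg _
    refine Real.iSup_le (fun j => ?_) (mul_nonneg hMpos.le hBnn)
    have hv : v = ∑ i, B.repr v i • B i := (B.sum_repr v).symm
    have hrepr : C.repr v j = ∑ i, B.repr v i * C.repr (B i) j := by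
      conv_lhs => rw [hv]
      rw [map_sum, Finsupp.finset_sum_apply]
      congr 1; funext i
      rw [map_smul, Finsupp.smul_apply, smul_eq_mul]
    rw [hrepr]
    refine nonarch_sum hna _ _ (mul_nonneg hMpos.le hBnn) fun i _ => ?_
    rw [norm_mul]
    have h1 : ‖B.repr v i‖ ≤ ⨆ i, ‖B.repr v i‖ :=
      le_ciSup ((Set.finite_range fun i => ‖B.repr v i‖).bddAbove) i
    have h2 : ‖C.repr (B i) j‖ ≤ M := by
      refine le_trans ?_ (le_max_right 1 M₀)
      exact Finset.le_sup' (f := fun p : Fin N × Fin N => ‖C.repr (B p.1) p.2‖)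
        (Finset.mem_univ (i, j))
    calc ‖B.repr v i‖ * ‖C.repr (B i) j‖ ≤ (⨆ i, ‖B.repr v i‖) * M :=
          mul_le_mul h1 h2 (norm_nonneg _) hBnn
      _ = M * ⨆ i, ‖B.repr v i‖ := mul_comm _ _

end SN2

section LB
variable {K V : Type*} [NormedField K] [CompleteSpace K] [AddCommGroup V] [Module K V]

lemma sum_norm_le {g : V → ℝ} (hg : IsVNorm K g) {ι : Type*} (s : Finset ι)
    (x : ι → K) (e : ι → V) :
    g (∑ i ∈ s, x i • e i) ≤ ∑ i ∈ s, ‖x i‖ * g (e i) := by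
  classical
  induction s using Finset.cons_induction with
  | empty => simpa using le_of_eq (vnorm_zero hg)
  | cons i s his ih =>
    rw [Finset.sum_cons, Finset.sum_cons]
    refine le_trans (hg.2.2.1 _ _) ?_
    rw [hg.2.1]
    exact add_le_add le_rfl ih

lemma vnorm_neg {g : V → ℝ} (hg : IsVNorm K g) (v : V) : g (-v) = g v := by
  have := hg.2.1 (-1 : K) v
  simpa using this

lemma coord_bound {g : V → ℝ} (hg : IsVNorm K g) (hu : IsUltra g) :
    ∀ (n : ℕ) (e : Fin n → V), LinearIndependent K e →
      ∃ c : ℝ, 0 < c ∧ ∀ (x : Fin n → K) (j : Fin n),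
        c * ‖x j‖ ≤ g (∑ i, x i • e i) := by
  intro n
  induction n with
  | zero => exact fun e _ => ⟨1, one_pos, fun x j => j.elim0⟩
  | succ n IH =>
    have last_bound : ∀ (e : Fin (n + 1) → V), LinearIndependent K e →
        ∃ c : ℝ, 0 < c ∧ ∀ x : Fin (n + 1) → K,
          c * ‖x (Fin.last n)‖ ≤ g (∑ i, x i • e i) := by
      intro e he
      obtain ⟨c₀, hc₀, hIH⟩ := IH (e ∘ Fin.castSucc)
        (he.comp Fin.castSucc (Fin.castSucc_injective n))
      by_contra hcon
      push_neg at hcon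
      have hseq : ∀ k : ℕ, ∃ x : Fin (n + 1) → K,
          g (∑ i, x i • e i) < (1/2 : ℝ) ^ k * ‖x (Fin.last n)‖ :=
        fun k => hcon _ (by positivity)
      choose x hx using hseq
      have hxlast : ∀ k, x k (Fin.last n) ≠ 0 := by
        intro k h
        have := hx k
        rw [h, norm_zero, mul_zero] at this
        exact absurd this (not_lt.mpr (hg.1 _))
      -- normalized sequence
      set y : ℕ → Fin (n + 1) → K :=
        fun k i => (x k (Fin.last n))⁻¹ * x k i with hy
      set u : ℕ → V := fun k => ∑ i, y k i • e i with hudef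
      have hylast : ∀ k, y k (Fin.last n) = 1 := fun k =>
        inv_mul_cancel₀ (hxlast k)
      have hgu : ∀ k, g (u k) < (1/2 : ℝ) ^ k := by
        intro k
        have : u k = (x k (Fin.last n))⁻¹ • ∑ i, x k i • e i := by
          rw [Finset.smul_sum]
          refine Finset.sum_congr rfl fun i _ => ?_
          rw [smul_smul]
        have hnz : ‖x k (Fin.last n)‖ ≠ 0 := norm_ne_zero_iff.mpr (hxlast k)
        rw [this, hg.2.1, norm_inv]
        calc ‖x k (Fin.last n)‖⁻¹ * g (∑ i, x k i • e i)
            < ‖x k (Fin.last n)‖⁻¹ * ((1/2:ℝ)^k * ‖x k (Fin.last n)‖) := by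
              refine (mul_lt_mul_iff_right₀ ?_).mpr (hx k)
              rw [inv_pos, norm_pos_iff]; exact hxlast k
          _ = (1/2:ℝ)^k := by
              field_simp
      -- difference estimate
      have hdiff : ∀ k l : ℕ, ∀ i : Fin n,
          c₀ * ‖y k (Fin.castSucc i) - y l (Fin.castSucc i)‖ ≤
            max ((1/2:ℝ)^k) ((1/2:ℝ)^l) := by
        intro k l i
        have hsum : u k - u l =
            ∑ i : Fin n, (y k (Fin.castSucc i) - y l (Fin.castSucc i)) •
              (e ∘ Fin.castSucc) i := by
          rw [hudef]
          simp only [← Finset.sum_sub_distrib, ← sub_smul]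
          rw [Fin.sum_univ_castSucc
            (f := fun i => (y k i - y l i) • e i)]
          simp [hylast]
        have h1 : c₀ * ‖y k (Fin.castSucc i) - y l (Fin.castSucc i)‖ ≤
            g (u k - u l) := by
          have := hIH (fun i => y k (Fin.castSucc i) - y l (Fin.castSucc i)) i
          rw [← hsum] at this
          exact this
        refine h1.trans ?_
        have : u k - u l = u k + (- u l) := sub_eq_add_neg _ _
        rw [this]
        refine (hu _ _).trans ?_
        rw [vnorm_neg hg]
        exact max_le_max (hgu k).le (hgu l).le
      -- coordinates form Cauchy sequences
      have hcauchy : ∀ i : Fin n, CauchySeq (fun k => y k (Fin.castSucc i)) := by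
        intro i
        refine cauchySeq_of_le_geometric (1/2) c₀⁻¹ (by norm_num) fun k => ?_
        rw [dist_eq_norm]
        have h2 := hdiff k (k + 1) i
        have hmax : max ((1/2:ℝ)^k) ((1/2:ℝ)^(k+1)) = (1/2:ℝ)^k := by
          rw [max_eq_left]
          exact pow_le_pow_of_le_one (by norm_num) (by norm_num) (Nat.le_succ k)
        rw [hmax] at h2
        calc ‖y k i.castSucc - y (k+1) i.castSucc‖
            = c₀⁻¹ * (c₀ * ‖y k i.castSucc - y (k+1) i.castSucc‖) := by
              field_simp
          _ ≤ c₀⁻¹ * (1/2)^k := by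
              exact mul_le_mul_of_nonneg_left h2 (inv_nonneg.mpr hc₀.le)
      choose z hz using fun i => cauchySeq_tendsto_of_complete (hcauchy i)
      set w : V := ∑ i : Fin n, z i • e (Fin.castSucc i) with hw
      set tvec : V := w + e (Fin.last n) with htv
      have hukdecomp : ∀ k, u k =
          (∑ i : Fin n, y k (Fin.castSucc i) • e (Fin.castSucc i)) + e (Fin.last n) := by
        intro k
        have huk : u k = ∑ i : Fin (n+1), y k i • e i := rfl
        rw [huk, Fin.sum_univ_castSucc (f := fun i => y k i • e i)]
        simp [hylast]
      have hgw : ∀ ε : ℝ, 0 < ε → g tvec < ε := by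
        intro ε hε
        set D : ℕ → ℝ := fun k =>
          ∑ i : Fin n, ‖y k (Fin.castSucc i) - z i‖ * g (e (Fin.castSucc i)) with hD
        have hDto : Filter.Tendsto D Filter.atTop (nhds 0) := by
          have : ∀ i : Fin n, Filter.Tendsto
              (fun k => ‖y k (Fin.castSucc i) - z i‖ * g (e (Fin.castSucc i)))
              Filter.atTop (nhds 0) := by
            intro i
            have h0 := (tendsto_iff_norm_sub_tendsto_zero.mp (hz i)).mul_const
              (g (e (Fin.castSucc i)))
            simpa using h0
          have hsum := tendsto_finset_sum (Finset.univ : Finset (Fin n))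
            (fun i _ => this i)
          simpa using hsum
        have hpow : Filter.Tendsto (fun k : ℕ => (1/2:ℝ)^k) Filter.atTop (nhds 0) :=
          tendsto_pow_atTop_nhds_zero_of_lt_one (by norm_num) (by norm_num)
        have hev := ((hDto.eventually (gt_mem_nhds hε)).and
          (hpow.eventually (gt_mem_nhds hε))).exists
        obtain ⟨k, hk1, hk2⟩ := hev
        have hdecomp : tvec - u k =
            ∑ i : Fin n, (z i - y k (Fin.castSucc i)) • e (Fin.castSucc i) := by
          rw [htv, hukdecomp k, hw]
          rw [add_sub_add_right_eq_sub, ← Finset.sum_sub_distrib]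
          simp [sub_smul]
        have hg1 : g (tvec - u k) < ε := by
          rw [hdecomp]
          refine lt_of_le_of_lt ?_ hk1
          refine le_trans (sum_norm_le hg _ _ _) ?_
          rw [hD]
          refine le_of_eq (Finset.sum_congr rfl fun i _ => ?_)
          rw [norm_sub_rev]
        have : g tvec ≤ max (g (tvec - u k)) (g (u k)) := by
          have h3 : tvec = (tvec - u k) + u k := by abel
          nth_rewrite 1 [h3]
          exact hu _ _
        exact lt_of_le_of_lt this (max_lt hg1 (lt_trans (hgu k) hk2))
      have htz : tvec = 0 := by
        refine hg.2.2.2 _ ?_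
        by_contra h
        have hpos : 0 < g tvec := lt_of_le_of_ne (hg.1 _) (Ne.symm h)
        exact absurd (hgw _ hpos) (lt_irrefl _)
      -- contradiction with linear independence
      have hrel : ∑ i : Fin (n+1), (Fin.snoc z (1:K) : Fin (n+1) → K) i • e i = 0 := by
        rw [Fin.sum_univ_castSucc (f := fun i => (Fin.snoc z (1:K) : Fin (n+1) → K) i • e i)]
        simp only [Fin.snoc_castSucc, Fin.snoc_last, one_smul]
        rw [← hw, ← htv]
        exact htz
      have := Fintype.linearIndependent_iff.mp he _ hrel (Fin.last n)
      rw [Fin.snoc_last] at this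
      exact one_ne_zero this
    -- now arbitrary coordinate via a swap
    have all_bound : ∀ (e : Fin (n+1) → V), LinearIndependent K e →
        ∀ j : Fin (n+1), ∃ c : ℝ, 0 < c ∧ ∀ x : Fin (n+1) → K,
          c * ‖x j‖ ≤ g (∑ i, x i • e i) := by
      intro e he j
      set σ : Equiv.Perm (Fin (n+1)) := Equiv.swap j (Fin.last n) with hσ
      obtain ⟨c, hc, hb⟩ := last_bound (e ∘ σ) (he.comp σ σ.injective)
      refine ⟨c, hc, fun x => ?_⟩
      have hsum : ∑ i, (x ∘ σ) i • (e ∘ σ) i = ∑ i, x i • e i :=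
        Equiv.sum_comp σ (fun i => x i • e i)
      have h4 := hb (x ∘ σ)
      rw [hsum] at h4
      have hσlast : σ (Fin.last n) = j := Equiv.swap_apply_right _ _
      simpa [hσlast] using h4
    intro e he
    choose cf hcf hbf using all_bound e he
    refine ⟨Finset.univ.inf' Finset.univ_nonempty cf, ?_, fun x j => ?_⟩
    · exact (Finset.lt_inf'_iff _).mpr fun j _ => hcf j
    · exact le_trans (mul_le_mul_of_nonneg_right
        (Finset.inf'_le _ (Finset.mem_univ j)) (norm_nonneg _)) (hbf j x)
end LB

section Ball
variable {K : Type*} [NormedField K]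

def ringO (hna : IsNonarchimedean (fun x : K => ‖x‖)) : Subring K where
  carrier := {x : K | ‖x‖ ≤ 1}
  mul_mem' := by
    intro a b ha hb
    simp only [Set.mem_setOf_eq, norm_mul] at *
    exact mul_le_one₀ ha (norm_nonneg _) hb
  one_mem' := by simp
  add_mem' := by
    intro a b ha hb
    exact le_trans (hna a b) (max_le ha hb)
  zero_mem' := by simp
  neg_mem' := by
    intro a ha
    simpa using ha

lemma mem_ringO {hna : IsNonarchimedean (fun x : K => ‖x‖)} {x : K} :
    x ∈ ringO hna ↔ ‖x‖ ≤ 1 := Iff.rfl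

lemma ringO_pir (hna : IsNonarchimedean (fun x : K => ‖x‖)) (π : K) (hπ0 : 0 < ‖π‖)
    (hπ1 : ‖π‖ < 1) (hdisc : ∀ x : K, x ≠ 0 → ∃ n : ℤ, ‖x‖ = ‖π‖ ^ n) :
    IsPrincipalIdealRing (ringO hna) := by
  constructor
  intro I
  by_cases hI : I = ⊥
  · subst hI
    exact ⟨⟨0, (Ideal.span_zero).symm⟩⟩
  · obtain ⟨x, hxI, hx0⟩ := Submodule.exists_mem_ne_zero_of_ne_bot hI
    have hxK : (x : K) ≠ 0 := fun h => hx0 (Subtype.ext h)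
    set P : ℤ → Prop := fun m => ∃ w : ringO hna, w ∈ I ∧ w ≠ 0 ∧ ‖(w : K)‖ = ‖π‖ ^ m
      with hP
    have hbdd : ∃ b : ℤ, ∀ m, P m → b ≤ m := by
      refine ⟨0, fun m hm => ?_⟩
      obtain ⟨w, hwI, hw0, hwn⟩ := hm
      by_contra hlt
      push_neg at hlt
      have h1 : (1:ℝ) < ‖π‖ ^ m := by
        have := zpow_lt_zpow_right_of_lt_one₀ hπ0 hπ1 hlt
        simpa using this
      have h2 : ‖(w : K)‖ ≤ 1 := w.2
      rw [hwn] at h2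
      exact absurd h2 (not_le.mpr h1)
    obtain ⟨m, hm⟩ := hdisc _ hxK
    obtain ⟨m₀, hPm₀, hleast⟩ := Int.exists_least_of_bdd hbdd ⟨m, x, hxI, hx0, hm⟩
    obtain ⟨x₀, hx₀I, hx₀0, hx₀n⟩ := hPm₀
    have hx₀K : (x₀ : K) ≠ 0 := fun h => hx₀0 (Subtype.ext h)
    refine ⟨⟨x₀, le_antisymm ?_ ?_⟩⟩
    · intro y hyI
      by_cases hy0 : y = 0
      · simp [hy0]
      · rw [Submodule.mem_span_singleton]
        have hyK : (y : K) ≠ 0 := fun h => hy0 (Subtype.ext h)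
        obtain ⟨m', hm'⟩ := hdisc _ hyK
        have hm0 : m₀ ≤ m' := hleast m' ⟨y, hyI, hy0, hm'⟩
        have hc : ‖(y : K) / (x₀ : K)‖ ≤ 1 := by
          rw [norm_div, hm', hx₀n, div_le_one (zpow_pos hπ0 _)]
          exact zpow_le_zpow_right_of_le_one₀ hπ0 hπ1.le hm0
        refine ⟨⟨(y : K) / (x₀ : K), hc⟩, ?_⟩
        apply Subtype.ext
        show ((y : K) / (x₀ : K)) * (x₀ : K) = (y : K)
        field_simp
    · rw [Submodule.span_le, Set.singleton_subset_iff]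
      exact hx₀I
end Ball
section BigBall
variable {K V : Type*} [NormedField K] [CompleteSpace K] [AddCommGroup V]
  [Module K V] [FiniteDimensional K V] {N : ℕ}

def ballSub (hna : IsNonarchimedean (fun x : K => ‖x‖)) {g : V → ℝ}
    (hg : IsVNorm K g) (hu : IsUltra g) : Submodule (ringO hna) V where
  carrier := {v | g v ≤ 1}
  add_mem' := fun {a b} ha hb => le_trans (hu a b) (max_le ha hb)
  zero_mem' := by
    show g 0 ≤ 1
    rw [vnorm_zero hg]; exact zero_le_one
  smul_mem' := fun c v hv => by
    show g (c • v) ≤ 1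
    rw [Subring.smul_def, hg.2.1]
    exact mul_le_one₀ c.2 (hg.1 v) hv

lemma mem_ballSub {hna : IsNonarchimedean (fun x : K => ‖x‖)} {g : V → ℝ}
    {hg : IsVNorm K g} {hu : IsUltra g} {v : V} :
    v ∈ ballSub hna hg hu ↔ g v ≤ 1 := Iff.rfl

lemma unitBall_basis (hdim : Module.finrank K V = N)
    (hna : IsNonarchimedean (fun x : K => ‖x‖)) (π : K) (hπ0 : 0 < ‖π‖) (hπ1 : ‖π‖ < 1)
    (hdisc : ∀ x : K, x ≠ 0 → ∃ n : ℤ, ‖x‖ = ‖π‖ ^ n)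
    {g : V → ℝ} (hg : IsVNorm K g) (hu : IsUltra g) :
    ∃ Bas : Module.Basis (Fin N) K V, ∀ v : V, (sn Bas v ≤ 1 ↔ g v ≤ 1) := by
  classical
  have hπne : π ≠ 0 := by
    intro h; rw [h, norm_zero] at hπ0; exact lt_irrefl _ hπ0
  haveI hpir : IsPrincipalIdealRing (ringO hna) := ringO_pir hna π hπ0 hπ1 hdisc
  set b : Module.Basis (Fin N) K V := (Module.finBasis K V).reindex (finCongr hdim) with hb
  obtain ⟨c, hc, hcb⟩ := coord_bound hg hu N b b.linearIndependent
  obtain ⟨t, ht⟩ := exists_pow_lt_of_lt_one hc hπ1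
  set BSub : Submodule (ringO hna) V := ballSub hna hg hu with hBSub
  have hmemB : ∀ v : V, v ∈ BSub ↔ g v ≤ 1 := fun v => Iff.rfl
  set fam : Fin N → V := fun i => (π⁻¹) ^ t • b i with hfam
  have hfamli : LinearIndependent K fam := by
    have hne : ((π⁻¹ : K) ^ t) ≠ 0 := pow_ne_zero _ (inv_ne_zero hπne)
    have h1 := b.linearIndependent.units_smul (fun _ => Units.mk0 _ hne)
    convert h1 using 1
    exact funext fun i => rfl
  have hinj : Function.Injective fun (r : ringO hna) => r • (1 : K) := by
    intro a b hab
    simp only [Subring.smul_def, smul_eq_mul, mul_one] at hab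
    exact Subtype.ext hab
  have hfamliO : LinearIndependent (ringO hna) fam := hfamli.restrict_scalars hinj
  set M₀ : Submodule (ringO hna) V := Submodule.span (ringO hna) (Set.range fam) with hM₀
  set basM₀ : Module.Basis (Fin N) (ringO hna) M₀ := Module.Basis.span hfamliO with hbasM₀
  have hBle : BSub ≤ M₀ := by
    intro v hv
    have hv1 : g v ≤ 1 := hv
    have hcoord : ∀ i, ‖π ^ t * b.repr v i‖ ≤ 1 := by
      intro i
      have h1 : c * ‖b.repr v i‖ ≤ g v := by
        have h2 := hcb (fun i => b.repr v i) i
        rwa [b.sum_repr v] at h2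
      rw [norm_mul, norm_pow]
      have h3 : ‖b.repr v i‖ ≤ 1 / c := by
        rw [le_div_iff₀ hc, mul_comm]
        exact le_trans h1 hv1
      calc ‖π‖ ^ t * ‖b.repr v i‖ ≤ c * (1 / c) :=
            mul_le_mul ht.le h3 (norm_nonneg _) hc.le
        _ = 1 := by field_simp
    have hvsum : v = ∑ i, (π ^ t * b.repr v i) • fam i := by
      conv_lhs => rw [← b.sum_repr v]
      refine Finset.sum_congr rfl fun i _ => ?_
      rw [hfam, smul_smul]
      congr 1
      rw [inv_pow, mul_assoc, mul_comm (b.repr v i), ← mul_assoc,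
        mul_inv_cancel₀ (pow_ne_zero _ hπne), one_mul]
    rw [hvsum]
    refine Submodule.sum_mem _ fun i _ => ?_
    have h4 : (π ^ t * b.repr v i) • fam i =
        (⟨π ^ t * b.repr v i, hcoord i⟩ : ringO hna) • fam i := by
      rw [Subring.smul_def]
    rw [h4]
    exact Submodule.smul_mem _ _ (Submodule.subset_span (Set.mem_range_self i))
  obtain ⟨n', basB⟩ := Submodule.basisOfPidOfLE hBle basM₀
  set famB : Fin n' → V := fun i => ((basB i : BSub) : V) with hfamB
  have hliO' : LinearIndependent (ringO hna) famB := by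
    have := basB.linearIndependent.map' BSub.subtype (Submodule.ker_subtype BSub)
    exact this
  have hliK : LinearIndependent K famB := by
    rw [Fintype.linearIndependent_iff]
    intro a ha
    set s : ℝ := 1 + ∑ j, ‖a j‖ with hs
    have hs1 : (1:ℝ) ≤ s := by
      rw [hs]
      have : (0:ℝ) ≤ ∑ j, ‖a j‖ := Finset.sum_nonneg fun j _ => norm_nonneg _
      linarith
    have hspos : 0 < s := lt_of_lt_of_le one_pos hs1
    obtain ⟨t', ht'⟩ := exists_pow_lt_of_lt_one (inv_pos.mpr hspos) hπ1
    have key : ∀ j, ‖π ^ t' * a j‖ ≤ 1 := by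
      intro j
      rw [norm_mul, norm_pow]
      have h1 : ‖a j‖ ≤ s := by
        rw [hs]
        have h2 : ‖a j‖ ≤ ∑ j, ‖a j‖ :=
          Finset.single_le_sum (fun j _ => norm_nonneg (a j)) (Finset.mem_univ j)
        linarith
      calc ‖π‖ ^ t' * ‖a j‖ ≤ s⁻¹ * s :=
            mul_le_mul ht'.le h1 (norm_nonneg _) (inv_pos.mpr hspos).le
        _ = 1 := inv_mul_cancel₀ hspos.ne'
    have hrel : ∑ j, (⟨π ^ t' * a j, key j⟩ : ringO hna) • famB j = 0 := by
      have h5 : ∀ j, (⟨π ^ t' * a j, key j⟩ : ringO hna) • famB j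
          = (π ^ t' : K) • (a j • famB j) := by
        intro j
        rw [Subring.smul_def, smul_smul]
      rw [Finset.sum_congr rfl fun j _ => h5 j, ← Finset.smul_sum, ha, smul_zero]
    intro i
    have h6 := Fintype.linearIndependent_iff.mp hliO' _ hrel i
    have h7 : π ^ t' * a i = 0 := Subtype.ext_iff.mp h6
    rcases mul_eq_zero.mp h7 with h8 | h8
    · exact absurd h8 (pow_ne_zero _ hπne)
    · exact h8
  have hspan : ⊤ ≤ Submodule.span K (Set.range famB) := by
    intro v _
    by_cases hv0 : v = 0
    · rw [hv0]; exact Submodule.zero_mem _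
    · have hgv : 0 < g v := vnorm_pos hg hv0
      obtain ⟨s', hs'⟩ := exists_pow_lt_of_lt_one (inv_pos.mpr hgv) hπ1
      have hmem : π ^ s' • v ∈ BSub := by
        rw [hmemB, hg.2.1, norm_pow]
        calc ‖π‖ ^ s' * g v ≤ (g v)⁻¹ * g v :=
              mul_le_mul_of_nonneg_right hs'.le hgv.le
          _ = 1 := inv_mul_cancel₀ hgv.ne'
      have h2 : (⟨π ^ s' • v, hmem⟩ : BSub) ∈ (⊤ : Submodule (ringO hna) BSub) :=
        Submodule.mem_top
      rw [← basB.span_eq] at h2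
      have h3 : π ^ s' • v ∈ Submodule.map BSub.subtype
          (Submodule.span (ringO hna) (Set.range basB)) :=
        ⟨_, h2, rfl⟩
      rw [Submodule.map_span] at h3
      have h4 : BSub.subtype '' Set.range basB = Set.range famB := by
        rw [← Set.range_comp]; rfl
      rw [h4] at h3
      have h5 : Submodule.span (ringO hna) (Set.range famB) ≤
          (Submodule.span K (Set.range famB)).restrictScalars (ringO hna) := by
        rw [Submodule.span_le]
        exact Submodule.subset_span
      have h6 : π ^ s' • v ∈ Submodule.span K (Set.range famB) := h5 h3
      have h7 := Submodule.smul_mem (Submodule.span K (Set.range famB)) ((π ^ s' : K)⁻¹) h6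
      rwa [inv_smul_smul₀ (pow_ne_zero _ hπne)] at h7
  set basV : Module.Basis (Fin n') K V := Module.Basis.mk hliK hspan with hbasV
  have hn'N : n' = N := by
    have h1 := Module.finrank_eq_card_basis basV
    rw [hdim, Fintype.card_fin] at h1
    omega
  refine ⟨basV.reindex (finCongr hn'N), fun v => ?_⟩
  have hrepr : ∀ i : Fin N, (basV.reindex (finCongr hn'N)).repr v i
      = basV.repr v ((finCongr hn'N).symm i) := fun i => by
    rw [Module.Basis.repr_reindex_apply]
  constructor
  · intro h
    have hcoords : ∀ j : Fin n', ‖basV.repr v j‖ ≤ 1 := by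
      intro j
      have h1 := coord_le_sn (basV.reindex (finCongr hn'N)) v ((finCongr hn'N) j)
      rw [hrepr] at h1
      simp only [finCongr_symm_apply, Fin.coe_cast, Equiv.symm_apply_apply] at h1
      exact le_trans h1 h
    rw [← hmemB]
    have hvs : v = ∑ j, basV.repr v j • famB j := by
      conv_lhs => rw [← basV.sum_repr v]
      refine Finset.sum_congr rfl fun j _ => ?_
      rw [hbasV, Module.Basis.mk_apply]
    have hvB : v = ((∑ j, (⟨basV.repr v j, hcoords j⟩ : ringO hna) • basB j : BSub) : V) := by
      rw [Submodule.coe_sum]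
      conv_lhs => rw [hvs]
      refine Finset.sum_congr rfl fun j _ => ?_
      rw [Submodule.coe_smul, Subring.smul_def]
    rw [hvB]
    exact Submodule.coe_mem _
  · intro h
    set vB : BSub := ⟨v, h⟩ with hvB
    have h1 : vB = ∑ j, basB.repr vB j • basB j := (basB.sum_repr vB).symm
    have hvsum : v = ∑ j, ((basB.repr vB j : K)) • famB j := by
      have h2 := congrArg (Subtype.val) h1
      rw [Submodule.coe_sum] at h2
      refine h2.trans (Finset.sum_congr rfl fun j _ => ?_)
      rw [Submodule.coe_smul, Subring.smul_def]
    have hcoord : ∀ j, basV.repr v j = (basB.repr vB j : K) := by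
      intro j
      have h3 : v = ∑ j, ((basB.repr vB j : K)) • basV j := by
        rw [hvsum]
        refine Finset.sum_congr rfl fun j _ => ?_
        rw [hbasV, Module.Basis.mk_apply]
      rw [h3]
      rw [basV.repr_sum_self]
    refine sn_le _ zero_le_one fun i => ?_
    rw [hrepr i, hcoord]
    exact (basB.repr vB _).2
end BigBall
section Sandwich
variable {K V : Type*} [NormedField K] [AddCommGroup V] [Module K V] {N : ℕ}

lemma sn_sandwich (π : K) (hπ0 : 0 < ‖π‖) (hπ1 : ‖π‖ < 1)
    (hdisc : ∀ x : K, x ≠ 0 → ∃ n : ℤ, ‖x‖ = ‖π‖ ^ n)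
    (Bas : Module.Basis (Fin N) K V) {g : V → ℝ} (hg : IsVNorm K g)
    (hball : ∀ v : V, sn Bas v ≤ 1 ↔ g v ≤ 1) {v : V} (hv : v ≠ 0) :
    ‖π‖ * sn Bas v < g v ∧ g v ≤ sn Bas v := by
  have hπK : π ≠ 0 := by
    intro h; rw [h, norm_zero] at hπ0; exact lt_irrefl _ hπ0
  obtain ⟨k, hk⟩ := sn_exists_pow hπ0 hdisc Bas hv
  have hNpos : 0 < sn Bas v := by rw [hk]; exact zpow_pos hπ0 _
  set u : V := (π ^ (-k) : K) • v with hu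
  have hLu : sn Bas u = 1 := by
    rw [hu, sn_smul, norm_zpow, hk, ← zpow_add₀ (ne_of_gt hπ0)]
    simp
  have hgu : g u ≤ 1 := (hball u).mp (le_of_eq hLu)
  have hgu2 : ¬ (g u ≤ ‖π‖) := by
    intro hle
    have h1 : g (π⁻¹ • u) ≤ 1 := by
      rw [hg.2.1, norm_inv]
      calc ‖π‖⁻¹ * g u ≤ ‖π‖⁻¹ * ‖π‖ :=
            mul_le_mul_of_nonneg_left hle (inv_nonneg.mpr hπ0.le)
        _ = 1 := inv_mul_cancel₀ (ne_of_gt hπ0)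
    have h2 : sn Bas (π⁻¹ • u) ≤ 1 := (hball _).mpr h1
    rw [sn_smul, norm_inv, hLu, mul_one] at h2
    have h3 : (1:ℝ) < ‖π‖⁻¹ := (one_lt_inv₀ hπ0).mpr hπ1
    linarith
  push_neg at hgu2
  have hgu3 : g u = ‖π‖ ^ (-k) * g v := by rw [hu, hg.2.1, norm_zpow]
  have hgv : g v = ‖π‖ ^ k * g u := by
    rw [hgu3, ← mul_assoc, ← zpow_add₀ (ne_of_gt hπ0)]
    simp
  constructor
  · rw [hk, hgv]
    calc ‖π‖ * ‖π‖ ^ k = ‖π‖ ^ k * ‖π‖ := mul_comm _ _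
      _ < ‖π‖ ^ k * g u := mul_lt_mul_of_pos_left hgu2 (zpow_pos hπ0 _)
  · rw [hgv, hk]
    calc ‖π‖ ^ k * g u ≤ ‖π‖ ^ k * 1 :=
          mul_le_mul_of_nonneg_left hgu (zpow_pos hπ0 _).le
      _ = ‖π‖ ^ k := mul_one _
end Sandwich

/-- If `K` is discretely valued with uniformizer `π`, then lattice norms form a discrete
closed subset of the ultrametric norms, and the unit ball of any ultrametric norm is a
lattice whose lattice norm is at Goldman–Iwahori distance at most `v_K(π)`. -/
theorem latticeNorms_discrete_closed_and_unitBall_lattice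
    {K V : Type*} [NormedField K] [CompleteSpace K]
    [AddCommGroup V] [Module K V] [FiniteDimensional K V] {N : ℕ}
    (hdim : Module.finrank K V = N)
    (hna : IsNonarchimedean (fun x : K => ‖x‖))
    (π : K) (hπ0 : 0 < ‖π‖) (hπ1 : ‖π‖ < 1)
    (hdisc : ∀ x : K, x ≠ 0 → ∃ n : ℤ, ‖x‖ = ‖π‖ ^ n) :
    (∀ f g : V → ℝ, IsLatticeNorm K N f → IsLatticeNorm K N g →
      (∃ v, f v ≠ g v) → -Real.log ‖π‖ ≤ dGI f g) ∧
    (∀ g : V → ℝ, IsVNorm K g → IsUltra g →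
      (∀ ε : ℝ, 0 < ε → ∃ f : V → ℝ, IsLatticeNorm K N f ∧ dGI f g < ε) →
      IsLatticeNorm K N g) ∧
    (∀ f : V → ℝ, IsVNorm K f → IsUltra f →
      ∃ L : V → ℝ, IsLatticeNorm K N L ∧
        {v : V | L v ≤ 1} = {v : V | f v ≤ 1} ∧
        dGI f L ≤ -Real.log ‖π‖) := by

  have hπK : π ≠ 0 := by
    intro h; rw [h, norm_zero] at hπ0; exact lt_irrefl _ hπ0
  have hlogπ : Real.log ‖π‖ < 0 := Real.log_neg hπ0 hπ1
  -- log-ratio of two lattice norms is uniformly bounded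
  have hbdd : ∀ B C : Module.Basis (Fin N) K V, ∃ M : ℝ, ∀ v : V, v ≠ 0 →
      |Real.log (sn B v) - Real.log (sn C v)| ≤ M := by
    intro B C
    obtain ⟨M1, hM1, h1⟩ := sn_le_mul hna B C
    obtain ⟨M2, hM2, h2⟩ := sn_le_mul hna C B
    refine ⟨max (Real.log M2) (Real.log M1), fun v hv => ?_⟩
    have hB : 0 < sn B v := sn_pos hπ0 hdisc B hv
    have hC : 0 < sn C v := sn_pos hπ0 hdisc C hv
    have e1 : Real.log (sn B v) ≤ Real.log M2 + Real.log (sn C v) := by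
      have h3 : sn B v ≤ M2 * sn C v := h2 v
      calc Real.log (sn B v) ≤ Real.log (M2 * sn C v) := Real.log_le_log hB h3
        _ = Real.log M2 + Real.log (sn C v) := Real.log_mul hM2.ne' hC.ne'
    have e2 : Real.log (sn C v) ≤ Real.log M1 + Real.log (sn B v) := by
      have h3 : sn C v ≤ M1 * sn B v := h1 v
      calc Real.log (sn C v) ≤ Real.log (M1 * sn B v) := Real.log_le_log hC h3
        _ = Real.log M1 + Real.log (sn B v) := Real.log_mul hM1.ne' hB.ne'
    rw [abs_sub_le_iff]
    constructor
    · exact le_trans (by linarith) (le_max_left _ _)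
    · exact le_trans (by linarith) (le_max_right _ _)
  refine ⟨?_, ?_, ?_⟩
  · -- discreteness
    rintro f g ⟨B, hB⟩ ⟨C, hC⟩ ⟨v₀, hne⟩
    have hfB : ∀ v, f v = sn B v := hB
    have hgC : ∀ v, g v = sn C v := hC
    have hv₀ : v₀ ≠ 0 := by
      intro h
      subst h
      exact hne (by rw [hfB 0, hgC 0, sn_zero, sn_zero])
    obtain ⟨m, hm⟩ := sn_exists_pow hπ0 hdisc B hv₀
    obtain ⟨k, hk⟩ := sn_exists_pow hπ0 hdisc C hv₀
    have hfv : f v₀ = ‖π‖ ^ m := (hfB v₀).trans hm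
    have hgv : g v₀ = ‖π‖ ^ k := (hgC v₀).trans hk
    have hmk : m ≠ k := fun h => hne (by rw [hfv, hgv, h])
    have hterm : -Real.log ‖π‖ ≤ |Real.log (f v₀) - Real.log (g v₀)| := by
      rw [hfv, hgv, Real.log_zpow, Real.log_zpow]
      have h1 : (1:ℝ) ≤ |(m:ℝ) - (k:ℝ)| := by
        have h2 : (1:ℝ) ≤ |((m - k : ℤ) : ℝ)| := by
          rw [← Int.cast_abs]
          exact_mod_cast Int.one_le_abs (sub_ne_zero.mpr hmk)
        rw [Int.cast_sub] at h2
        exact h2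
      calc -Real.log ‖π‖ = 1 * (-Real.log ‖π‖) := (one_mul _).symm
        _ ≤ |(m:ℝ) - (k:ℝ)| * (-Real.log ‖π‖) :=
            mul_le_mul_of_nonneg_right h1 (by linarith)
        _ = |(m:ℝ) - (k:ℝ)| * |Real.log ‖π‖| := by rw [abs_of_neg hlogπ]
        _ = |((m:ℝ) - (k:ℝ)) * Real.log ‖π‖| := (abs_mul _ _).symm
        _ = |(m:ℝ) * Real.log ‖π‖ - (k:ℝ) * Real.log ‖π‖| := by ring_nf
    obtain ⟨M, hM⟩ := hbdd B C
    have hbd : BddAbove (Set.range fun v : {v : V // v ≠ 0} =>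
        |Real.log (f v) - Real.log (g v)|) := by
      refine ⟨M, ?_⟩
      rintro x ⟨⟨v, hv⟩, rfl⟩
      simp only
      rw [hfB v, hgC v]
      exact hM v hv
    exact le_trans hterm (le_ciSup hbd (⟨v₀, hv₀⟩ : {v : V // v ≠ 0}))
  · -- closedness
    intro g hg hu happ
    obtain ⟨Bas, hball⟩ := unitBall_basis hdim hna π hπ0 hπ1 hdisc hg hu
    refine ⟨Bas, fun v => ?_⟩
    by_contra hneq
    have hv : v ≠ 0 := by
      intro h
      subst h
      exact hneq ((vnorm_zero hg).trans (sn_zero Bas).symm)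
    obtain ⟨h1, h2⟩ := sn_sandwich π hπ0 hπ1 hdisc Bas hg hball hv
    obtain ⟨k, hk⟩ := sn_exists_pow hπ0 hdisc Bas hv
    have hgpos : 0 < g v := vnorm_pos hg hv
    have hsn : 0 < sn Bas v := sn_pos hπ0 hdisc Bas hv
    have hglt : g v < sn Bas v := lt_of_le_of_ne h2 (fun h => hneq h)
    set a := Real.log ‖π‖ with ha
    set lg := Real.log (g v) with hlg
    have hwin1 : lg < (k:ℝ) * a := by
      have h3 := Real.log_lt_log hgpos hglt
      rw [hk, Real.log_zpow] at h3
      exact h3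
    have hwin2 : a + (k:ℝ) * a < lg := by
      have h3 := Real.log_lt_log (mul_pos hπ0 hsn) h1
      rw [Real.log_mul (ne_of_gt hπ0) (ne_of_gt hsn), hk, Real.log_zpow] at h3
      exact h3
    set δ := min ((k:ℝ) * a - lg) (lg - (a + (k:ℝ) * a)) with hδ
    have hδpos : 0 < δ := lt_min (by linarith) (by linarith)
    obtain ⟨f, hfL, hdist⟩ := happ δ hδpos
    obtain ⟨B, hB⟩ := hfL
    have hfB : ∀ w, f w = sn B w := hB
    obtain ⟨M, hM⟩ := hbdd B Bas
    have hfam : ∀ w : V, w ≠ 0 → |Real.log (f w) - Real.log (g w)| ≤ M + (-a) := by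
      intro w hw
      obtain ⟨hs1, hs2⟩ := sn_sandwich π hπ0 hπ1 hdisc Bas hg hball hw
      have hsnw : 0 < sn Bas w := sn_pos hπ0 hdisc Bas hw
      have hgw : 0 < g w := vnorm_pos hg hw
      have t1 : |Real.log (f w) - Real.log (sn Bas w)| ≤ M := by
        rw [hfB w]
        exact hM w hw
      have t2 : |Real.log (sn Bas w) - Real.log (g w)| ≤ -a := by
        have e1 : Real.log (g w) ≤ Real.log (sn Bas w) := Real.log_le_log hgw hs2
        have e2 : a + Real.log (sn Bas w) < Real.log (g w) := by
          have h3 := Real.log_lt_log (mul_pos hπ0 hsnw) hs1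
          rwa [Real.log_mul (ne_of_gt hπ0) (ne_of_gt hsnw)] at h3
        rw [abs_sub_le_iff]
        constructor <;> linarith
      calc |Real.log (f w) - Real.log (g w)|
          ≤ |Real.log (f w) - Real.log (sn Bas w)|
            + |Real.log (sn Bas w) - Real.log (g w)| := abs_sub_le _ _ _
        _ ≤ M + (-a) := add_le_add t1 t2
    have hbd2 : BddAbove (Set.range fun w : {w : V // w ≠ 0} =>
        |Real.log (f w) - Real.log (g w)|) := by
      refine ⟨M + (-a), ?_⟩
      rintro x ⟨⟨w, hw⟩, rfl⟩
      exact hfam w hw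
    have hvle : |Real.log (f v) - Real.log (g v)| ≤ dGI f g :=
      le_ciSup hbd2 (⟨v, hv⟩ : {w : V // w ≠ 0})
    have hvlt : |Real.log (f v) - lg| < δ := lt_of_le_of_lt hvle hdist
    obtain ⟨m, hm⟩ := sn_exists_pow hπ0 hdisc B hv
    have hlogf : Real.log (f v) = (m:ℝ) * a := by
      rw [(hfB v).trans hm, Real.log_zpow, ha]
    rcases le_or_gt m k with hmk | hmk
    · have hka : (k:ℝ) * a ≤ (m:ℝ) * a :=
        mul_le_mul_of_nonpos_right (by exact_mod_cast hmk) hlogπ.le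
      have h9 : δ ≤ (m:ℝ) * a - lg := le_trans (min_le_left _ _) (by linarith)
      have h10 : δ ≤ |Real.log (f v) - lg| := by
        rw [hlogf]
        exact le_trans h9 (le_abs_self _)
      linarith
    · have hk1m : (k:ℝ) + 1 ≤ (m:ℝ) := by exact_mod_cast hmk
      have hma : (m:ℝ) * a ≤ a + (k:ℝ) * a := by nlinarith
      have h9 : δ ≤ lg - (m:ℝ) * a := le_trans (min_le_right _ _) (by linarith)
      have h10 : δ ≤ |Real.log (f v) - lg| := by
        rw [hlogf, abs_sub_comm]
        exact le_trans h9 (le_abs_self _)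
      linarith
  · -- unit ball
    intro f hf hu
    obtain ⟨Bas, hball⟩ := unitBall_basis hdim hna π hπ0 hπ1 hdisc hf hu
    refine ⟨sn Bas, ⟨Bas, fun v => rfl⟩, Set.ext fun v => hball v, ?_⟩
    refine Real.iSup_le ?_ (by linarith)
    rintro ⟨v, hv⟩
    obtain ⟨h1, h2⟩ := sn_sandwich π hπ0 hπ1 hdisc Bas hf hball hv
    have hsn : 0 < sn Bas v := sn_pos hπ0 hdisc Bas hv
    have hfv : 0 < f v := vnorm_pos hf hv
    have e1 : Real.log (f v) ≤ Real.log (sn Bas v) := Real.log_le_log hfv h2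
    have e2 : Real.log ‖π‖ + Real.log (sn Bas v) < Real.log (f v) := by
      have h3 := Real.log_lt_log (mul_pos hπ0 hsn) h1
      rwa [Real.log_mul (ne_of_gt hπ0) (ne_of_gt hsn)] at h3
    simp only
    rw [abs_sub_le_iff]
    constructor <;> linarith
end

section
/- Each relative successive minimum λ_i(‖·‖,‖·‖') is a 1-Lipschitz function of each norm argument with respect to the Goldman–Iwahori metric; moreover the Goldman–Iwahori distance satisfies d_GI(‖·‖,‖·‖') = max{λ₁(‖·‖,‖·‖'), λ₁(‖·‖',‖·‖)}. -/
set_option linter.unusedSectionVars false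
set_option linter.unusedVariables false

section Basics
variable {K : Type*} [NormedField K] {V : Type*} [AddCommGroup V] [Module K V] {f : V → ℝ}

lemma IsVNorm.zero (hf : IsVNorm K f) : f 0 = 0 := by
  have := hf.2.1 (0 : K) 0
  simpa using this

lemma IsVNorm.pos (hf : IsVNorm K f) {v : V} (hv : v ≠ 0) : 0 < f v :=
  (hf.1 v).lt_of_ne' fun h => hv (hf.2.2.2 v h)

lemma IsVNorm.neg (hf : IsVNorm K f) (v : V) : f (-v) = f v := by
  have := hf.2.1 (-1 : K) v
  simpa using this

lemma IsVNorm.sub_le (hf : IsVNorm K f) (v w : V) : f (v - w) ≤ f v + f w := by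
  rw [sub_eq_add_neg]
  exact (hf.2.2.1 v (-w)).trans (by rw [hf.neg])

lemma IsVNorm.sum_le (hf : IsVNorm K f) {ι : Type*} (s : Finset ι) (u : ι → V) :
    f (∑ i ∈ s, u i) ≤ ∑ i ∈ s, f (u i) := by
  classical
  induction s using Finset.induction with
  | empty => simp [hf.zero]
  | insert _ _ hx ih =>
    rw [Finset.sum_insert hx, Finset.sum_insert hx]
    exact (hf.2.2.1 _ _).trans (by linarith)

end Basics

section Pi
variable {K : Type*} [NormedField K]

/-- A vector norm on `Fin n → K` is dominated by the sup of coordinates. -/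
lemma pi_norm_le {n : ℕ} {G : (Fin n → K) → ℝ} (hG : IsVNorm K G) (x : Fin n → K) :
    G x ≤ ∑ j, ‖x j‖ * G (Pi.single j 1) := by
  have hx : x = ∑ j, x j • (Pi.single j (1 : K) : Fin n → K) := by
    funext t
    simp [Pi.single_apply, Finset.sum_ite_eq, mul_comm]
  calc G x = G (∑ j, x j • (Pi.single j (1 : K) : Fin n → K)) := by rw [← hx]
    _ ≤ ∑ j, G (x j • (Pi.single j (1 : K) : Fin n → K)) := hG.sum_le _ _
    _ = ∑ j, ‖x j‖ * G (Pi.single j 1) := by simp [hG.2.1]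

variable [CompleteSpace K]

theorem pi_coord_bound :
    ∀ (n : ℕ) (G : (Fin n → K) → ℝ), IsVNorm K G →
      ∀ i : Fin n, ∃ c : ℝ, 0 < c ∧ ∀ x, ‖x i‖ ≤ c * G x := by
  intro n
  induction n with
  | zero => exact fun G hG i => i.elim0
  | succ n IH =>
    have hlast : ∀ G : (Fin (n + 1) → K) → ℝ, IsVNorm K G →
        ∃ c : ℝ, 0 < c ∧ ∀ x, ‖x (Fin.last n)‖ ≤ c * G x := by
      intro G hG
      by_contra hcon
      push_neg at hcon
      -- extract a sequence with last coordinate 1 and small norm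
      have hW : ∀ k : ℕ, ∃ w : Fin (n + 1) → K, w (Fin.last n) = 1 ∧ G w < 1 / (k + 1) := by
        intro k
        obtain ⟨x, hx⟩ := hcon (k + 1) (by positivity)
        have hGx := hG.1 x
        have hxl : x (Fin.last n) ≠ 0 := by
          intro h0
          rw [h0, norm_zero] at hx
          nlinarith
        have hpos : 0 < ‖x (Fin.last n)‖ := norm_pos_iff.2 hxl
        refine ⟨(x (Fin.last n))⁻¹ • x, by simp [hxl], ?_⟩
        rw [hG.2.1, norm_inv]
        rw [inv_mul_lt_iff₀ hpos]  -- maybe wrong name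
        rw [mul_one_div, lt_div_iff₀ (by positivity : (0:ℝ) < (k:ℝ) + 1)]
        linarith
      choose w hw1 hw2 using hW
      set y : ℕ → Fin n → K := fun k j => w k j.castSucc with hy
      -- restricted norm
      set G₀ : (Fin n → K) → ℝ := fun z => G (Fin.snoc z (0:K)) with hG₀def
      have hsnoc_sub : ∀ (u v : Fin n → K), (Fin.snoc u 0 : Fin (n+1) → K) - Fin.snoc v 0 = Fin.snoc (u - v) 0 := by
        intro u v; funext t
        refine Fin.lastCases ?_ (fun j => ?_) t <;> simp
      have hG₀ : IsVNorm K G₀ := by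
        refine ⟨fun z => hG.1 _, fun a z => ?_, fun z₁ z₂ => ?_, fun z hz => ?_⟩
        · have : (Fin.snoc (a • z) 0 : Fin (n+1) → K) = a • (Fin.snoc z 0 : Fin (n+1) → K) := by
            funext t
            refine Fin.lastCases ?_ (fun j => ?_) t <;> simp
          simp only [hG₀def, this, hG.2.1]
        · have : (Fin.snoc (z₁ + z₂) 0 : Fin (n+1) → K) = Fin.snoc z₁ 0 + Fin.snoc z₂ 0 := by
            funext t
            refine Fin.lastCases ?_ (fun j => ?_) t <;> simp
          simp only [hG₀def, this]
          exact hG.2.2.1 _ _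
        · have h0 := hG.2.2.2 _ hz
          funext j
          have := congrFun h0 j.castSucc
          simpa using this
      obtain ⟨c, hcpos, hcb⟩ : ∃ c : Fin n → ℝ, (∀ j, 0 < c j) ∧
          ∀ j z, ‖z j‖ ≤ c j * G₀ z := by
        choose c h1 h2 using IH G₀ hG₀
        exact ⟨c, h1, fun j z => h2 j z⟩
      -- the sequences of coordinates are Cauchy
      have hwsub : ∀ k m : ℕ, (Fin.snoc (y k - y m) 0 : Fin (n+1) → K) = w k - w m := by
        intro k m; funext t
        refine Fin.lastCases ?_ (fun j => ?_) t
        · simp [hw1]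
        · simp [hy]
      have hdiff : ∀ k m : ℕ, G₀ (y k - y m) ≤ 1 / (k + 1) + 1 / (m + 1) := by
        intro k m
        have : G₀ (y k - y m) = G (w k - w m) := congrArg G (hwsub k m)
        rw [this]
        exact (hG.sub_le _ _).trans (by have := hw2 k; have := hw2 m; linarith)
      have hcauchy : ∀ j : Fin n, ∃ a : K, Filter.Tendsto (fun k => y k j) Filter.atTop (nhds a) := by
        intro j
        refine cauchySeq_tendsto_of_complete (cauchySeq_of_le_tendsto_0
          (fun N => c j * (2 / (N + 1))) (fun k m N hk hm => ?_) ?_)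
        · rw [dist_eq_norm]
          have h1 : ‖(y k - y m) j‖ ≤ c j * G₀ (y k - y m) := hcb j _
          have h2 := hdiff k m
          have h3 : (1:ℝ) / (k + 1) ≤ 1 / (N + 1) := by
            apply one_div_le_one_div_of_le (by positivity)
            have : (N:ℝ) ≤ k := Nat.cast_le.mpr hk
            linarith
          have h4 : (1:ℝ) / (m + 1) ≤ 1 / (N + 1) := by
            apply one_div_le_one_div_of_le (by positivity)
            have : (N:ℝ) ≤ m := Nat.cast_le.mpr hm
            linarith
          have h5 : G₀ (y k - y m) ≤ 2 / (N + 1) := by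
            rw [div_eq_mul_one_div]
            linarith
          have : ‖y k j - y m j‖ = ‖(y k - y m) j‖ := by simp
          rw [this]
          calc ‖(y k - y m) j‖ ≤ c j * G₀ (y k - y m) := h1
            _ ≤ c j * (2 / (N + 1)) := by
                exact mul_le_mul_of_nonneg_left h5 (hcpos j).le
        · have : Filter.Tendsto (fun N : ℕ => (1:ℝ) / (N + 1)) Filter.atTop (nhds 0) :=
            tendsto_one_div_add_atTop_nhds_zero_nat
          have h2 : Filter.Tendsto (fun N : ℕ => c j * (2 * (1 / (N + 1)))) Filter.atTop (nhds (c j * (2 * 0))) :=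
            (this.const_mul 2).const_mul (c j)
          simpa [mul_one_div, div_eq_mul_inv] using h2
      choose a ha using hcauchy
      -- the limit vector contradicts nondegeneracy
      set z : Fin (n + 1) → K := Fin.snoc a 1 with hz
      have hzw : ∀ k, z - w k = (Fin.snoc (a - y k) 0 : Fin (n+1) → K) := by
        intro k; funext t
        refine Fin.lastCases ?_ (fun j => ?_) t
        · simp [hz, hw1]
        · simp [hz, hy]
      have hle : ∀ k, G z ≤ G (w k) + ∑ j, ‖a j - y k j‖ * G₀ (Pi.single j 1) := by
        intro k
        have h1 : G z ≤ G (w k) + G (z - w k) := by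
          have := hG.2.2.1 (w k) (z - w k)
          simpa using this
        have h2 : G (z - w k) = G₀ (a - y k) := by rw [hG₀def, hzw]
        have h3 := pi_norm_le hG₀ (a - y k)
        have h4 : ∀ j, ‖(a - y k) j‖ = ‖a j - y k j‖ := by intro j; simp
        calc G z ≤ G (w k) + G₀ (a - y k) := by rw [← h2]; exact h1
          _ ≤ G (w k) + ∑ j, ‖a j - y k j‖ * G₀ (Pi.single j 1) := by
              have h5 : G₀ (a - y k) ≤ ∑ j, ‖a j - y k j‖ * G₀ (Pi.single j 1) := by
                refine h3.trans (le_of_eq ?_)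
                exact Finset.sum_congr rfl fun j _ => by rw [h4 j]
              linarith
      have htend : Filter.Tendsto
          (fun k => G (w k) + ∑ j, ‖a j - y k j‖ * G₀ (Pi.single j 1))
          Filter.atTop (nhds 0) := by
        have t1 : Filter.Tendsto (fun k => G (w k)) Filter.atTop (nhds 0) := by
          apply squeeze_zero (fun k => hG.1 _) (fun k => (hw2 k).le)
          exact tendsto_one_div_add_atTop_nhds_zero_nat
        have t2 : Filter.Tendsto (fun k => ∑ j, ‖a j - y k j‖ * G₀ (Pi.single j 1))
            Filter.atTop (nhds 0) := by
          have : Filter.Tendsto (fun k => ∑ j : Fin n, ‖a j - y k j‖ * G₀ (Pi.single j 1))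
              Filter.atTop (nhds (∑ j : Fin n, (0 : ℝ))) := by
            refine tendsto_finset_sum _ fun j _ => ?_
            have hj : Filter.Tendsto (fun k => ‖y k j - a j‖) Filter.atTop (nhds 0) :=
              tendsto_iff_norm_sub_tendsto_zero.1 (ha j)
            have hj' : Filter.Tendsto (fun k => ‖a j - y k j‖) Filter.atTop (nhds 0) := by
              simpa [norm_sub_rev] using hj
            simpa using hj'.mul_const (G₀ (Pi.single j 1))
          simpa using this
        simpa using t1.add t2
      have hz0 : G z ≤ 0 := ge_of_tendsto' htend hle
      have : z = 0 := hG.2.2.2 z (le_antisymm hz0 (hG.1 z))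
      have h1 : z (Fin.last n) = 1 := by simp [hz]
      rw [this] at h1
      exact one_ne_zero h1.symm
    -- now reduce general coordinate to the last one via a swap
    intro G hG i
    set e : Equiv.Perm (Fin (n + 1)) := Equiv.swap i (Fin.last n) with he
    have hG' : IsVNorm K (fun x => G (x ∘ e)) := by
      refine ⟨fun x => hG.1 _, fun a x => ?_, fun x₁ x₂ => ?_, fun x hx => ?_⟩
      · exact hG.2.1 a (x ∘ e)
      · exact hG.2.2.1 _ _
      · have h0 := hG.2.2.2 _ hx
        funext t
        have := congrFun h0 (e.symm t)
        simpa using this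
    obtain ⟨c, hc, hb⟩ := hlast _ hG'
    refine ⟨c, hc, fun x => ?_⟩
    have := hb (x ∘ e.symm)
    have h1 : (x ∘ ⇑e.symm) ∘ ⇑e = x := by
      funext t; simp
    have h2 : (x ∘ ⇑e.symm) (Fin.last n) = x i := by
      simp [he, Equiv.symm_apply_eq]
    rw [h1, h2] at this
    exact this

end Pi

section Abstract

lemma iInf_lip {ι : Sort*} (F G : ι → ℝ) (d : ℝ) (hd : 0 ≤ d)
    (h : ∀ i, |F i - G i| ≤ d) (hF : BddBelow (Set.range F)) (hG : BddBelow (Set.range G)) :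
    |(⨅ i, F i) - ⨅ i, G i| ≤ d := by
  rcases isEmpty_or_nonempty ι with hι | hι
  · simpa [Real.iInf_of_isEmpty] using hd
  have key : ∀ (F G : ι → ℝ), (∀ i, |F i - G i| ≤ d) → BddBelow (Set.range F) →
      (⨅ i, F i) - d ≤ ⨅ i, G i := by
    intro F G h hF
    refine le_ciInf fun i => ?_
    have h1 := ciInf_le hF i
    have h2 := (abs_sub_le_iff.1 (h i)).1
    linarith
  have h1 := key F G h hF
  have h2 := key G F (fun i => by rw [abs_sub_comm]; exact h i) hG
  rw [abs_sub_le_iff]; constructor <;> linarith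

lemma iSup_lip {ι : Sort*} (F G : ι → ℝ) (d : ℝ) (hd : 0 ≤ d)
    (h : ∀ i, |F i - G i| ≤ d) (hF : BddAbove (Set.range F)) (hG : BddAbove (Set.range G)) :
    |(⨆ i, F i) - ⨆ i, G i| ≤ d := by
  rcases isEmpty_or_nonempty ι with hι | hι
  · simpa [Real.iSup_of_isEmpty] using hd
  have key : ∀ (F G : ι → ℝ), (∀ i, |F i - G i| ≤ d) → BddAbove (Set.range G) →
      (⨆ i, F i) ≤ (⨆ i, G i) + d := by
    intro F G h hG
    refine ciSup_le fun i => ?_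
    have h1 := le_ciSup hG i
    have h2 := (abs_sub_le_iff.1 (h i)).1
    linarith
  have h1 := key F G h hG
  have h2 := key G F (fun i => by rw [abs_sub_comm]; exact h i) hF
  rw [abs_sub_le_iff]; constructor <;> linarith

end Abstract

section Transfer
variable {K : Type*} [NormedField K] [CompleteSpace K] {V : Type*} [AddCommGroup V]
  [Module K V] [FiniteDimensional K V]

lemma ratio_bound {f g : V → ℝ} (hf : IsVNorm K f) (hg : IsVNorm K g) :
    ∃ C : ℝ, 0 < C ∧ ∀ v, g v ≤ C * f v := by
  classical
  set n := Module.finrank K V with hn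
  set b : Module.Basis (Fin n) K V := Module.finBasis K V with hb
  set G : (Fin n → K) → ℝ := fun x => f (b.equivFun.symm x) with hGdef
  have hG : IsVNorm K G := by
    refine ⟨fun x => hf.1 _, fun a x => ?_, fun x₁ x₂ => ?_, fun x hx => ?_⟩
    · rw [hGdef]; simp only [map_smul]; exact hf.2.1 a _
    · rw [hGdef]; simp only [map_add]; exact hf.2.2.1 _ _
    · have := hf.2.2.2 _ hx
      have h2 : b.equivFun.symm x = 0 := this
      exact b.equivFun.symm.injective (by simp [h2])
  choose c hcpos hcb using pi_coord_bound n G hG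
  refine ⟨(∑ i, c i * g (b i)) + 1, ?_, fun v => ?_⟩
  · have : 0 ≤ ∑ i, c i * g (b i) :=
      Finset.sum_nonneg fun i _ => mul_nonneg (hcpos i).le (hg.1 _)
    linarith
  · have hcoord : ∀ i, ‖b.repr v i‖ ≤ c i * f v := by
      intro i
      have h1 := hcb i (b.equivFun v)
      have h2 : G (b.equivFun v) = f v := congrArg f (b.equivFun.symm_apply_apply v)
      rw [h2] at h1
      simpa [Module.Basis.equivFun_apply] using h1
    calc g v = g (∑ i, b.repr v i • b i) := by rw [Module.Basis.sum_repr]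
      _ ≤ ∑ i, g (b.repr v i • b i) := hg.sum_le _ _
      _ = ∑ i, ‖b.repr v i‖ * g (b i) := by
          exact Finset.sum_congr rfl fun i _ => hg.2.1 _ _
      _ ≤ ∑ i, (c i * f v) * g (b i) := by
          refine Finset.sum_le_sum fun i _ => ?_
          exact mul_le_mul_of_nonneg_right (hcoord i) (hg.1 _)
      _ = (∑ i, c i * g (b i)) * f v := by
          rw [Finset.sum_mul]; exact Finset.sum_congr rfl fun i _ => by ring
      _ ≤ ((∑ i, c i * g (b i)) + 1) * f v := by
          have := hf.1 v; nlinarith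

lemma log_bound {f g : V → ℝ} (hf : IsVNorm K f) (hg : IsVNorm K g) :
    ∃ M : ℝ, 0 ≤ M ∧ ∀ v : V, v ≠ 0 → |Real.log (f v) - Real.log (g v)| ≤ M := by
  obtain ⟨C₁, hC₁, hgf⟩ := ratio_bound hf hg
  obtain ⟨C₂, hC₂, hfg⟩ := ratio_bound hg hf
  refine ⟨|Real.log C₁| + |Real.log C₂|, by positivity, fun v hv => ?_⟩
  have hfv := hf.pos hv
  have hgv := hg.pos hv
  rw [abs_sub_le_iff]
  constructor
  · have h1 : f v ≤ C₂ * g v := hfg v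
    have h2 : Real.log (f v) ≤ Real.log C₂ + Real.log (g v) := by
      calc Real.log (f v) ≤ Real.log (C₂ * g v) := Real.log_le_log hfv h1
        _ = Real.log C₂ + Real.log (g v) := Real.log_mul hC₂.ne' hgv.ne'
    have := le_abs_self (Real.log C₂)
    have := abs_nonneg (Real.log C₁)
    linarith
  · have h1 : g v ≤ C₁ * f v := hgf v
    have h2 : Real.log (g v) ≤ Real.log C₁ + Real.log (f v) := by
      calc Real.log (g v) ≤ Real.log (C₁ * f v) := Real.log_le_log hgv h1
        _ = Real.log C₁ + Real.log (f v) := Real.log_mul hC₁.ne' hfv.ne'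
    have := le_abs_self (Real.log C₁)
    have := abs_nonneg (Real.log C₂)
    linarith

end Transfer

noncomputable def lamMin (K : Type*) {V : Type*} [NormedField K] [AddCommGroup V]
    [Module K V] (f g : V → ℝ) (i : ℕ) : ℝ :=
  ⨆ W : {W : Submodule K V // i ≤ Module.finrank K W},
    ⨅ w : {w : V // w ∈ W.1 ∧ w ≠ 0}, Real.log (g (w : V) / f (w : V))

section Main
variable {K : Type*} [NormedField K] [CompleteSpace K] {V : Type*} [AddCommGroup V]
  [Module K V] [FiniteDimensional K V]

/-- the inner infimum in `lamMin` -/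
noncomputable def II (K : Type*) {V : Type*} [NormedField K] [AddCommGroup V] [Module K V]
    (f g : V → ℝ) (W : Submodule K V) : ℝ :=
  ⨅ w : {w : V // w ∈ W ∧ w ≠ 0}, Real.log (g (w : V) / f (w : V))

lemma lamMin_eq (f g : V → ℝ) (i : ℕ) :
    lamMin K f g i =
      ⨆ W : {W : Submodule K V // i ≤ Module.finrank K W}, II K f g W.1 := rfl

variable {f g : V → ℝ}

lemma log_div_eq (hf : IsVNorm K f) (hg : IsVNorm K g) {v : V} (hv : v ≠ 0) :
    Real.log (g v / f v) = Real.log (g v) - Real.log (f v) :=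
  Real.log_div (hg.pos hv).ne' (hf.pos hv).ne'

lemma abs_log_div_le (hf : IsVNorm K f) (hg : IsVNorm K g) {M : ℝ}
    (hM : ∀ v : V, v ≠ 0 → |Real.log (f v) - Real.log (g v)| ≤ M)
    {v : V} (hv : v ≠ 0) : |Real.log (g v / f v)| ≤ M := by
  rw [log_div_eq hf hg hv, abs_sub_comm]
  exact hM v hv

lemma abs_II_le (hf : IsVNorm K f) (hg : IsVNorm K g) {M : ℝ} (hM0 : 0 ≤ M)
    (hM : ∀ v : V, v ≠ 0 → |Real.log (f v) - Real.log (g v)| ≤ M)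
    (W : Submodule K V) : |II K f g W| ≤ M := by
  rcases isEmpty_or_nonempty {w : V // w ∈ W ∧ w ≠ 0} with hι | hι
  · rw [II, Real.iInf_of_isEmpty, abs_zero]; exact hM0
  · have hbdd : BddBelow (Set.range fun w : {w : V // w ∈ W ∧ w ≠ 0} =>
        Real.log (g (w : V) / f (w : V))) := by
      refine ⟨-M, ?_⟩
      rintro _ ⟨w, rfl⟩
      exact (abs_le.1 (abs_log_div_le hf hg hM w.2.2)).1
    rw [abs_le]
    constructor
    · exact le_ciInf fun w => (abs_le.1 (abs_log_div_le hf hg hM w.2.2)).1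
    · obtain ⟨w⟩ := hι
      exact (ciInf_le hbdd w).trans (abs_le.1 (abs_log_div_le hf hg hM w.2.2)).2

lemma bddBelow_inner (hf : IsVNorm K f) (hg : IsVNorm K g) {M : ℝ}
    (hM : ∀ v : V, v ≠ 0 → |Real.log (f v) - Real.log (g v)| ≤ M) (W : Submodule K V) :
    BddBelow (Set.range fun w : {w : V // w ∈ W ∧ w ≠ 0} =>
      Real.log (g (w : V) / f (w : V))) := by
  refine ⟨-M, ?_⟩
  rintro _ ⟨w, rfl⟩
  exact (abs_le.1 (abs_log_div_le hf hg hM w.2.2)).1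

lemma bdd_outer (hf : IsVNorm K f) (hg : IsVNorm K g) {M : ℝ} (hM0 : 0 ≤ M)
    (hM : ∀ v : V, v ≠ 0 → |Real.log (f v) - Real.log (g v)| ≤ M) (i : ℕ) :
    BddAbove (Set.range fun W : {W : Submodule K V // i ≤ Module.finrank K W} =>
      II K f g W.1) := by
  refine ⟨M, ?_⟩
  rintro _ ⟨W, rfl⟩
  exact (abs_le.1 (abs_II_le hf hg hM0 hM W.1)).2

lemma dGI_nonneg : 0 ≤ dGI f g := Real.iSup_nonneg fun v => abs_nonneg _

lemma le_dGI {M : ℝ} (hM : ∀ v : V, v ≠ 0 → |Real.log (f v) - Real.log (g v)| ≤ M)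
    {v : V} (hv : v ≠ 0) : |Real.log (f v) - Real.log (g v)| ≤ dGI f g := by
  refine le_ciSup (f := fun v : {v : V // v ≠ 0} => |Real.log (f v) - Real.log (g v)|)
    ⟨M, ?_⟩ ⟨v, hv⟩
  rintro _ ⟨w, rfl⟩
  exact hM w.1 w.2

end Main

section Main2
variable {K : Type*} [NormedField K] [CompleteSpace K] {V : Type*} [AddCommGroup V]
  [Module K V] [FiniteDimensional K V]

/-- Lipschitz estimate for `lamMin` in the first argument. -/
lemma lamMin_lip_fst {f f' g : V → ℝ} (hf : IsVNorm K f) (hf' : IsVNorm K f')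
    (hg : IsVNorm K g) (i : ℕ) :
    |lamMin K f g i - lamMin K f' g i| ≤ dGI f f' := by
  obtain ⟨M₁, hM₁0, hM₁⟩ := log_bound hf hg
  obtain ⟨M₂, hM₂0, hM₂⟩ := log_bound hf' hg
  obtain ⟨M₃, hM₃0, hM₃⟩ := log_bound hf hf'
  rw [lamMin_eq, lamMin_eq]
  refine iSup_lip _ _ _ dGI_nonneg (fun W => ?_) (bdd_outer hf hg hM₁0 hM₁ i)
    (bdd_outer hf' hg hM₂0 hM₂ i)
  refine iInf_lip _ _ _ dGI_nonneg (fun w => ?_) (bddBelow_inner hf hg hM₁ W.1)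
    (bddBelow_inner hf' hg hM₂ W.1)
  have hw := w.2.2
  rw [log_div_eq hf hg hw, log_div_eq hf' hg hw]
  have heq : Real.log (g (w:V)) - Real.log (f (w:V)) -
      (Real.log (g (w:V)) - Real.log (f' (w:V))) =
      -(Real.log (f (w:V)) - Real.log (f' (w:V))) := by ring
  rw [heq, abs_neg]
  exact le_dGI hM₃ hw

/-- Lipschitz estimate for `lamMin` in the second argument. -/
lemma lamMin_lip_snd {f g g' : V → ℝ} (hf : IsVNorm K f) (hg : IsVNorm K g)
    (hg' : IsVNorm K g') (i : ℕ) :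
    |lamMin K f g i - lamMin K f g' i| ≤ dGI g g' := by
  obtain ⟨M₁, hM₁0, hM₁⟩ := log_bound hf hg
  obtain ⟨M₂, hM₂0, hM₂⟩ := log_bound hf hg'
  obtain ⟨M₃, hM₃0, hM₃⟩ := log_bound hg hg'
  rw [lamMin_eq, lamMin_eq]
  refine iSup_lip _ _ _ dGI_nonneg (fun W => ?_) (bdd_outer hf hg hM₁0 hM₁ i)
    (bdd_outer hf hg' hM₂0 hM₂ i)
  refine iInf_lip _ _ _ dGI_nonneg (fun w => ?_) (bddBelow_inner hf hg hM₁ W.1)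
    (bddBelow_inner hf hg' hM₂ W.1)
  have hw := w.2.2
  rw [log_div_eq hf hg hw, log_div_eq hf hg' hw]
  have heq : Real.log (g (w:V)) - Real.log (f (w:V)) -
      (Real.log (g' (w:V)) - Real.log (f (w:V))) =
      Real.log (g (w:V)) - Real.log (g' (w:V)) := by ring
  rw [heq]
  exact le_dGI hM₃ hw

lemma II_span {f g : V → ℝ} (hf : IsVNorm K f) (hg : IsVNorm K g) {M : ℝ}
    (hM : ∀ v : V, v ≠ 0 → |Real.log (f v) - Real.log (g v)| ≤ M)
    {v : V} (hv : v ≠ 0) :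
    II K f g (Submodule.span K {v}) = Real.log (g v / f v) := by
  haveI : Nonempty {w : V // w ∈ Submodule.span K {v} ∧ w ≠ 0} :=
    ⟨⟨v, Submodule.mem_span_singleton_self v, hv⟩⟩
  refine le_antisymm (ciInf_le (bddBelow_inner hf hg hM _)
    ⟨v, Submodule.mem_span_singleton_self v, hv⟩) (le_ciInf fun w => ?_)
  obtain ⟨w, hwmem, hw0⟩ := w
  obtain ⟨a, rfl⟩ := Submodule.mem_span_singleton.1 hwmem
  have ha : a ≠ 0 := by rintro rfl; exact hw0 (zero_smul K v)
  have hna : ‖a‖ ≠ 0 := norm_ne_zero_iff.2 ha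
  simp only [hf.2.1, hg.2.1]
  rw [mul_div_mul_left _ _ hna]

lemma lamMin_one_eq {f g : V → ℝ} [Nontrivial V] (hf : IsVNorm K f) (hg : IsVNorm K g) :
    lamMin K f g 1 = ⨆ v : {v : V // v ≠ 0}, Real.log (g (v : V) / f (v : V)) := by
  obtain ⟨M, hM0, hM⟩ := log_bound hf hg
  obtain ⟨v₀, hv₀⟩ := exists_ne (0 : V)
  have hbddS : BddAbove (Set.range fun v : {v : V // v ≠ 0} =>
      Real.log (g (v : V) / f (v : V))) := by
    refine ⟨M, ?_⟩
    rintro _ ⟨w, rfl⟩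
    exact (abs_le.1 (abs_log_div_le hf hg hM w.2)).2
  have hspan : (1 : ℕ) ≤ Module.finrank K (Submodule.span K {v₀}) := by
    rw [finrank_span_singleton hv₀]
  haveI : Nonempty {W : Submodule K V // 1 ≤ Module.finrank K W} :=
    ⟨⟨Submodule.span K {v₀}, hspan⟩⟩
  haveI : Nonempty {v : V // v ≠ 0} := ⟨⟨v₀, hv₀⟩⟩
  rw [lamMin_eq]
  refine le_antisymm (ciSup_le fun W => ?_) ?_
  · -- each II is at most the sup
    have hW : ∃ w : V, w ∈ W.1 ∧ w ≠ 0 := by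
      by_contra hcon
      push_neg at hcon
      have : W.1 = ⊥ := by
        rw [eq_bot_iff]
        intro w hw
        by_cases h : w = 0
        · simp [h]
        · exact absurd h (not_not.2 (hcon w hw))
      have h2 := W.2
      rw [this, finrank_bot] at h2
      omega
    obtain ⟨w, hwmem, hw0⟩ := hW
    refine le_trans (ciInf_le (bddBelow_inner hf hg hM W.1) ⟨w, hwmem, hw0⟩) ?_
    exact le_ciSup hbddS ⟨w, hw0⟩
  · refine ciSup_le fun v => ?_
    rw [← II_span hf hg hM v.2]
    refine le_ciSup (f := fun W : {W : Submodule K V // 1 ≤ Module.finrank K W} =>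
      II K f g W.1) (bdd_outer hf hg hM0 hM 1)
      ⟨Submodule.span K {(v : V)}, by rw [finrank_span_singleton v.2]⟩

lemma dGI_eq_max {f g : V → ℝ} (hf : IsVNorm K f) (hg : IsVNorm K g) :
    dGI f g = max (lamMin K f g 1) (lamMin K g f 1) := by
  obtain ⟨M, hM0, hM⟩ := log_bound hf hg
  have hMgf : ∀ v : V, v ≠ 0 → |Real.log (g v) - Real.log (f v)| ≤ M := by
    intro v hv; rw [abs_sub_comm]; exact hM v hv
  rcases subsingleton_or_nontrivial V with hV | hV
  · have hempty : IsEmpty {v : V // v ≠ 0} := ⟨fun v => v.2 (Subsingleton.elim _ _)⟩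
    have hWempty : IsEmpty {W : Submodule K V // 1 ≤ Module.finrank K W} := by
      refine ⟨fun W => ?_⟩
      have h1 := W.2
      have h2 : Module.finrank K W.1 ≤ Module.finrank K V := Submodule.finrank_le W.1
      have h3 : Module.finrank K V = 0 := Module.finrank_zero_of_subsingleton
      omega
    rw [dGI, lamMin_eq, lamMin_eq, Real.iSup_of_isEmpty, Real.iSup_of_isEmpty,
      Real.iSup_of_isEmpty]
    simp
  · have habs : ∀ v : V, v ≠ 0 → |Real.log (f v) - Real.log (g v)| =
        max (Real.log (g v / f v)) (Real.log (f v / g v)) := by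
      intro v hv
      rw [log_div_eq hf hg hv, log_div_eq hg hf hv, abs_sub_comm, abs_eq_max_neg, neg_sub]
    rw [lamMin_one_eq hf hg, lamMin_one_eq hg hf]
    obtain ⟨v₀, hv₀⟩ := exists_ne (0 : V)
    haveI : Nonempty {v : V // v ≠ 0} := ⟨⟨v₀, hv₀⟩⟩
    have hbddA : BddAbove (Set.range fun v : {v : V // v ≠ 0} =>
        Real.log (g (v : V) / f (v : V))) := by
      refine ⟨M, ?_⟩; rintro _ ⟨w, rfl⟩
      exact (abs_le.1 (abs_log_div_le hf hg hM w.2)).2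
    have hbddB : BddAbove (Set.range fun v : {v : V // v ≠ 0} =>
        Real.log (f (v : V) / g (v : V))) := by
      refine ⟨M, ?_⟩; rintro _ ⟨w, rfl⟩
      exact (abs_le.1 (abs_log_div_le hg hf hMgf w.2)).2
    refine le_antisymm (ciSup_le fun v => ?_) (max_le (ciSup_le fun v => ?_) (ciSup_le fun v => ?_))
    · rw [habs v.1 v.2]
      exact max_le_max (le_ciSup hbddA v) (le_ciSup hbddB v)
    · refine le_trans ?_ (le_dGI hM v.2)
      rw [habs v.1 v.2]
      exact le_max_left _ _
    · refine le_trans ?_ (le_dGI hM v.2)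
      rw [habs v.1 v.2]
      exact le_max_right _ _

end Main2

/-- Each relative successive minimum is `1`-Lipschitz in each argument for the
Goldman–Iwahori metric, and `d_GI(‖·‖,‖·‖') = max{λ₁(‖·‖,‖·‖'), λ₁(‖·‖',‖·‖)}`. -/
theorem successive_minima_lipschitz_and_dGI_eq_max
    {K V : Type*} [NormedField K] [CompleteSpace K]
    [AddCommGroup V] [Module K V] [FiniteDimensional K V]
    (f f' g g' : V → ℝ) (hf : IsVNorm K f) (hf' : IsVNorm K f')
    (hg : IsVNorm K g) (hg' : IsVNorm K g') :
    (∀ i : ℕ, |lamMin K f g i - lamMin K f' g i| ≤ dGI f f' ∧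
        |lamMin K f g i - lamMin K f g' i| ≤ dGI g g') ∧
      dGI f g = max (lamMin K f g 1) (lamMin K g f 1) := by
  exact ⟨fun i => ⟨lamMin_lip_fst hf hf' hg i, lamMin_lip_snd hf hg hg' i⟩,
    dGI_eq_max hf hg⟩
end
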